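/- arXiv:1609.03307 — 5 statements merged into one kernel-verified Lean document; each statement's English description precedes it below -/
import Mathlib

section
/- Let C₂ > 0 and let ζ : ℝ × ℝ → ℝ be a continuous function such that ζ(x,y) < (x − y)^{-1} whenever x > y. Then there exists l₀ > 0 such that for every l ≥ l₀ and every (x,y) ∈ [−C₂, C₂] × [−C₂, C₂] one has ζ(x,y) ≤ lΨ(lx, ly). -/
/-- `Ψ(x, y) = (e^(y-x) - 1)/(y - x)` for `x ≠ y`, and `Ψ(x, x) = 1`. -/
noncomputable def Psi (x y : ℝ) : ℝ :=
  if x = y then 1 else (Real.exp (y - x) - 1) / (y - x)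

lemma lPsi_eq (l x y : ℝ) (hl : 0 < l) (hxy : x ≠ y) :
    l * Psi (l * x) (l * y) = (Real.exp (l * (y - x)) - 1) / (y - x) := by
  have h : l * x ≠ l * y := fun h => hxy (mul_left_cancel₀ hl.ne' h)
  rw [Psi, if_neg h]
  have hne : y - x ≠ 0 := sub_ne_zero.mpr (Ne.symm hxy)
  have heq : l * y - l * x = l * (y - x) := by ring
  rw [heq]
  field_simp

lemma one_sub_exp_neg_ge (s : ℝ) (hs0 : 0 ≤ s) (hs1 : s ≤ 1) :
    s / 2 ≤ 1 - Real.exp (-s) := by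
  have h1 : s + 1 ≤ Real.exp s := Real.add_one_le_exp s
  have h2 : Real.exp (-s) * Real.exp s = 1 := by
    rw [← Real.exp_add]; simp
  have h3 : (0:ℝ) < Real.exp s := Real.exp_pos s
  nlinarith [sq_nonneg s, Real.exp_pos (-s)]

/-- if `C₂ > 0` and `ζ : ℝ × ℝ → ℝ` is continuous with
`ζ(x, y) < (x - y)⁻¹` whenever `x > y`, then there exists `l₀ > 0` such that for
every `l ≥ l₀` and every `(x, y) ∈ [-C₂, C₂] × [-C₂, C₂]` one has
`ζ(x, y) ≤ l·Ψ(l·x, l·y)`. -/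
theorem zeta_le_lPsi_of_lt_inv (C₂ : ℝ) (hC₂ : 0 < C₂) (ζ : ℝ × ℝ → ℝ)
    (hζ : Continuous ζ) (hζlt : ∀ x y : ℝ, x > y → ζ (x, y) < (x - y)⁻¹) :
    ∃ l₀ : ℝ, 0 < l₀ ∧ ∀ l ≥ l₀, ∀ x ∈ Set.Icc (-C₂) C₂, ∀ y ∈ Set.Icc (-C₂) C₂,
      ζ (x, y) ≤ l * Psi (l * x) (l * y) := by
  set K : Set (ℝ × ℝ) := Set.Icc (-C₂) C₂ ×ˢ Set.Icc (-C₂) C₂ with hKdef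
  have hKc : IsCompact K := isCompact_Icc.prod isCompact_Icc
  obtain ⟨M, hM⟩ : ∃ M, ∀ p ∈ K, ζ p ≤ M := by
    obtain ⟨B, hB⟩ := (hKc.image hζ).bddAbove
    exact ⟨B, fun p hp => hB (Set.mem_image_of_mem _ hp)⟩
  set M' := max M 1 with hM'def
  have hM'1 : (1:ℝ) ≤ M' := le_max_right _ _
  have hM'pos : (0:ℝ) < M' := lt_of_lt_of_le one_pos hM'1
  have hMle : ∀ p ∈ K, ζ p ≤ M' := fun p hp => (hM p hp).trans (le_max_left _ _)
  have hexp1 : Real.exp (-1) < 1 := by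
    rw [Real.exp_lt_one_iff]; norm_num
  set ε := (1 - Real.exp (-1)) / M' with hεdef
  have hεpos : 0 < ε := div_pos (by linarith) hM'pos
  set Kε := K ∩ {p : ℝ × ℝ | ε ≤ p.1 - p.2} with hKεdef
  have hKεc : IsCompact Kε :=
    hKc.inter_right (isClosed_le continuous_const (continuous_fst.sub continuous_snd))
  have hgcont : Continuous (fun p : ℝ × ℝ => 1 - (p.1 - p.2) * ζ p) := by
    continuity
  obtain ⟨δ, hδpos, hδ⟩ : ∃ δ > 0, ∀ p ∈ Kε, δ ≤ 1 - (p.1 - p.2) * ζ p := by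
    rcases Kε.eq_empty_or_nonempty with h | h
    · exact ⟨1, one_pos, by simp [h]⟩
    · obtain ⟨p₀, hp₀, hmin⟩ := hKεc.exists_isMinOn h hgcont.continuousOn
      refine ⟨1 - (p₀.1 - p₀.2) * ζ p₀, ?_, fun p hp => hmin hp⟩
      have ht : 0 < p₀.1 - p₀.2 := lt_of_lt_of_le hεpos hp₀.2
      have hlt : ζ (p₀.1, p₀.2) < (p₀.1 - p₀.2)⁻¹ := hζlt _ _ (by linarith)
      have h2 : (p₀.1 - p₀.2) * ζ p₀ < 1 := by
        have h3 : (p₀.1 - p₀.2) * ζ (p₀.1, p₀.2) < (p₀.1 - p₀.2) * (p₀.1 - p₀.2)⁻¹ :=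
          mul_lt_mul_of_pos_left hlt ht
        rw [mul_inv_cancel₀ ht.ne'] at h3
        simpa using h3
      linarith
  refine ⟨max (2 * M') ((-Real.log δ) / ε), lt_of_lt_of_le (by linarith) (le_max_left _ _),
    ?_⟩
  intro l hl x hx y hy
  have hl2M : 2 * M' ≤ l := le_trans (le_max_left _ _) hl
  have hlpos : 0 < l := lt_of_lt_of_le (by linarith) hl2M
  have hxyK : (x, y) ∈ K := Set.mk_mem_prod hx hy
  have hζM : ζ (x, y) ≤ M' := hMle _ hxyK
  have hexpδ : Real.exp (-(l * ε)) ≤ δ := by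
    have h1 : (-Real.log δ) / ε ≤ l := le_trans (le_max_right _ _) hl
    have h2 : -Real.log δ ≤ l * ε := by
      rw [div_le_iff₀ hεpos] at h1; linarith
    calc Real.exp (-(l * ε)) ≤ Real.exp (Real.log δ) :=
          Real.exp_le_exp.mpr (by linarith)
      _ = δ := Real.exp_log hδpos
  rcases lt_trichotomy x y with hlt | heq | hgt
  · -- x < y : l·Ψ = (e^{l(y-x)}-1)/(y-x) ≥ l ≥ 2M' ≥ ζ
    rw [lPsi_eq l x y hlpos hlt.ne]
    have hs : 0 < y - x := by linarith
    have h1 : l ≤ (Real.exp (l * (y - x)) - 1) / (y - x) := by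
      rw [le_div_iff₀ hs]
      nlinarith [Real.add_one_le_exp (l * (y - x))]
    linarith
  · -- x = y
    subst heq
    rw [Psi, if_pos rfl, mul_one]
    linarith
  · -- x > y
    have hxyne : x ≠ y := hgt.ne'
    rw [lPsi_eq l x y hlpos hxyne]
    set t := x - y with htdef
    have ht : 0 < t := sub_pos.mpr hgt
    have hyx : y - x = -t := by rw [htdef]; ring
    rw [hyx]
    have hrw : (Real.exp (l * (-t)) - 1) / (-t) = (1 - Real.exp (-(l * t))) / t := by
      rw [mul_neg]
      field_simp
      ring
    rw [hrw]
    rw [le_div_iff₀ ht]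
    -- goal: ζ (x,y) * t ≤ 1 - exp(-(l*t))
    rcases le_or_gt ε t with hεt | htε
    · -- t ≥ ε : use δ
      have hKεmem : (x, y) ∈ Kε := ⟨hxyK, by simpa [htdef] using hεt⟩
      have h1 : δ ≤ 1 - t * ζ (x, y) := by
        have := hδ _ hKεmem
        simpa [htdef] using this
      have h2 : Real.exp (-(l * t)) ≤ Real.exp (-(l * ε)) := by
        apply Real.exp_le_exp.mpr
        have : l * ε ≤ l * t := mul_le_mul_of_nonneg_left hεt hlpos.le
        linarith
      nlinarith
    · rcases le_or_gt (l * t) 1 with hlt1 | hlt1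
      · -- l*t ≤ 1 : 1 - e^{-lt} ≥ lt/2 ≥ M'·t ≥ ζ·t
        have h1 : l * t / 2 ≤ 1 - Real.exp (-(l * t)) :=
          one_sub_exp_neg_ge (l * t) (by positivity) hlt1
        have h2 : ζ (x, y) * t ≤ M' * t := mul_le_mul_of_nonneg_right hζM ht.le
        nlinarith
      · -- l*t > 1 : 1 - e^{-lt} ≥ 1 - e^{-1} = M'·ε > M'·t ≥ ζ·t
        have h1 : Real.exp (-(l * t)) ≤ Real.exp (-1) :=
          Real.exp_le_exp.mpr (by linarith)
        have h2 : ζ (x, y) * t ≤ M' * t := mul_le_mul_of_nonneg_right hζM ht.le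
        have h3 : M' * t < M' * ε := mul_lt_mul_of_pos_left htε hM'pos
        have h4 : M' * ε = 1 - Real.exp (-1) := by
          rw [hεdef, mul_div_cancel₀ _ hM'pos.ne']
        nlinarith
end

section
/- Let φ be an n × n complex matrix and let s be a Hermitian n × n complex matrix. Then the function ζ(t) = Tr([φ, exp(−ts)·φ*·exp(ts)]·s) is real-valued and differentiable on ℝ, and for every t ∈ ℝ its derivative equals ζ'(t) = ‖[s, exp(ts/2)·φ·exp(−ts/2)]‖_F²; in particular ζ is nondecreasing on ℝ. -/
open Matrix

/-- The squared Frobenius norm of a complex matrix, associated with the Frobenius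
inner product `⟨A, B⟩ = Tr (A Bᴴ)`, i.e. `‖A‖_F² = Re (Tr (A Aᴴ))`. -/
noncomputable def frobSq {n : ℕ} (A : Matrix (Fin n) (Fin n) ℂ) : ℝ :=
  ((A * Aᴴ).trace).re

section helpers

open NormedSpace

variable {n : ℕ}

private lemma trace_self_mul_conjTranspose (A : Matrix (Fin n) (Fin n) ℂ) :
    (A * Aᴴ).trace = ((frobSq A : ℝ) : ℂ) := by
  have h : (A * Aᴴ).trace = ((∑ i, ∑ j, Complex.normSq (A i j) : ℝ) : ℂ) := by
    simp [Matrix.trace, Matrix.diag, Matrix.mul_apply, Matrix.conjTranspose_apply,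
      Complex.mul_conj]
  rw [h, frobSq, h]
  simp

private lemma frobSq_nonneg' (A : Matrix (Fin n) (Fin n) ℂ) : 0 ≤ frobSq A := by
  have h : (A * Aᴴ).trace = ((∑ i, ∑ j, Complex.normSq (A i j) : ℝ) : ℂ) := by
    simp [Matrix.trace, Matrix.diag, Matrix.mul_apply, Matrix.conjTranspose_apply,
      Complex.mul_conj]
  rw [frobSq, h, Complex.ofReal_re]
  exact Finset.sum_nonneg fun i _ => Finset.sum_nonneg fun j _ => Complex.normSq_nonneg _

private lemma conj_trace (f g s X : Matrix (Fin n) (Fin n) ℂ)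
    (hfg : f * g = 1) (hsf : s * f = f * s) :
    ((g * X * f) * s).trace = (X * s).trace := by
  calc ((g * X * f) * s).trace = (g * (X * (f * s))).trace := by simp [mul_assoc]
    _ = (g * (X * (s * f))).trace := by rw [← hsf]
    _ = ((X * (s * f)) * g).trace := Matrix.trace_mul_comm _ _
    _ = (X * s).trace := by simp [mul_assoc, hfg]

private lemma key2' (A B s : Matrix (Fin n) (Fin n) ℂ) :
    ((A * (B * s - s * B) - (B * s - s * B) * A) * s).trace
      = ((s * A - A * s) * (B * s - s * B)).trace := by
  have h1 : (B * (s * (A * s))).trace = (A * (s * (B * s))).trace := by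
    rw [← mul_assoc, Matrix.trace_mul_comm, mul_assoc]
  have h2 : (s * (B * (A * s))).trace = (s * (s * (B * A))).trace := by
    rw [show s * (B * (A * s)) = (s * (B * A)) * s by simp [mul_assoc], Matrix.trace_mul_comm]
  simp only [mul_sub, sub_mul, Matrix.trace_sub, mul_assoc]
  rw [Matrix.trace_mul_comm s (A * (B * s)),
      Matrix.trace_mul_comm s (A * (s * B)),
      Matrix.trace_mul_comm A (s * (B * s)),
      Matrix.trace_mul_comm A (s * (s * B))]
  simp only [mul_assoc]
  rw [h1, h2]

private lemma exp_smul_add (s : Matrix (Fin n) (Fin n) ℂ) (a b : ℂ) :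
    exp ((a + b) • s) = exp (a • s) * exp (b • s) := by
  rw [add_smul]
  exact Matrix.exp_add_of_commute _ _ (((Commute.refl s).smul_left a).smul_right b)

private lemma exp_smul_mul_exp_neg_smul (s : Matrix (Fin n) (Fin n) ℂ) (a : ℂ) :
    exp (a • s) * exp ((-a) • s) = 1 := by
  rw [← Matrix.exp_add_of_commute _ _ (((Commute.refl s).smul_left a).smul_right (-a))]
  rw [← add_smul]
  simp [NormedSpace.exp_zero]

private lemma exp_neg_smul_mul_exp_smul (s : Matrix (Fin n) (Fin n) ℂ) (a : ℂ) :
    exp ((-a) • s) * exp (a • s) = 1 := by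
  have := exp_smul_mul_exp_neg_smul s (-a)
  rwa [neg_neg] at this

private lemma smul_comm_exp (s : Matrix (Fin n) (Fin n) ℂ) (a : ℂ) :
    s * exp (a • s) = exp (a • s) * s :=
  (((Commute.refl s).smul_right a).exp_right).eq

private lemma exp_smul_conjTranspose (s : Matrix (Fin n) (Fin n) ℂ) (hs : s.IsHermitian)
    (a : ℂ) (ha : star a = a) : (exp (a • s))ᴴ = exp (a • s) := by
  rw [← Matrix.exp_conjTranspose]
  congr 1
  rw [conjTranspose_smul, hs.eq, ha]

end helpers

section main

open NormedSpace

variable {n : ℕ}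

/-- `ζ(t)` rewritten in terms of `ψ = exp(t/2 s) φ exp(-t/2 s)`. -/
private lemma trace_eq_psi (φ s : Matrix (Fin n) (Fin n) ℂ) (hs : s.IsHermitian) (t : ℝ) :
    ((φ * (exp ((-(t : ℂ)) • s) * φᴴ * exp ((t : ℂ) • s))
        - (exp ((-(t : ℂ)) • s) * φᴴ * exp ((t : ℂ) • s)) * φ) * s).trace
    = (((exp (((t : ℂ) / 2) • s) * φ * exp ((-((t : ℂ) / 2)) • s))
        * (exp (((t : ℂ) / 2) • s) * φ * exp ((-((t : ℂ) / 2)) • s))ᴴ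
        - (exp (((t : ℂ) / 2) • s) * φ * exp ((-((t : ℂ) / 2)) • s))ᴴ
        * (exp (((t : ℂ) / 2) • s) * φ * exp ((-((t : ℂ) / 2)) • s))) * s).trace := by
  set f := exp (((t : ℂ) / 2) • s) with hf
  set g := exp ((-((t : ℂ) / 2)) • s) with hg
  have hfg : f * g = 1 := exp_smul_mul_exp_neg_smul s _
  have hgf : g * f = 1 := exp_neg_smul_mul_exp_smul s _
  have hsf : s * f = f * s := smul_comm_exp s _
  have hfH : fᴴ = f := exp_smul_conjTranspose s hs _ (by simp)
  have hgH : gᴴ = g := exp_smul_conjTranspose s hs _ (by simp)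
  set ψ := f * φ * g with hψ
  have hψH : ψᴴ = g * φᴴ * f := by
    rw [hψ]
    simp [conjTranspose_mul, hfH, hgH, mul_assoc]
  have hep : exp ((t : ℂ) • s) = f * f := by
    have h : (t : ℂ) = (t : ℂ) / 2 + (t : ℂ) / 2 := by ring
    rw [h, exp_smul_add]
  have hem : exp ((-(t : ℂ)) • s) = g * g := by
    have h : (-(t : ℂ)) = -((t : ℂ) / 2) + -((t : ℂ) / 2) := by ring
    rw [h, exp_smul_add]
  have hφ : φ = g * ψ * f := by
    rw [hψ]
    calc φ = (g * f) * φ * (g * f) := by rw [hgf]; simp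
      _ = g * (f * φ * g) * f := by simp [mul_assoc]
  have hm : exp ((-(t : ℂ)) • s) * φᴴ * exp ((t : ℂ) • s) = g * ψᴴ * f := by
    rw [hψH, hem, hep]
    simp [mul_assoc]
  have collapse : ∀ X Y : Matrix (Fin n) (Fin n) ℂ,
      (g * X * f) * (g * Y * f) = g * (X * Y) * f := by
    intro X Y
    calc (g * X * f) * (g * Y * f) = g * X * (f * g) * (Y * f) := by simp [mul_assoc]
      _ = g * (X * Y) * f := by rw [hfg]; simp [mul_assoc]
  rw [hm]
  rw [hφ]
  rw [collapse, collapse, show g * (ψ * ψᴴ) * f - g * (ψᴴ * ψ) * f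
      = g * (ψ * ψᴴ - ψᴴ * ψ) * f by simp [Matrix.mul_sub, Matrix.sub_mul]]
  rw [conj_trace _ _ _ _ hfg hsf]

/-- `ζ(t)` is real. -/
private lemma zeta_im (φ s : Matrix (Fin n) (Fin n) ℂ) (hs : s.IsHermitian) (t : ℝ) :
    (((φ * (exp ((-(t : ℂ)) • s) * φᴴ * exp ((t : ℂ) • s))
        - (exp ((-(t : ℂ)) • s) * φᴴ * exp ((t : ℂ) • s)) * φ) * s).trace).im = 0 := by
  rw [trace_eq_psi φ s hs t]
  set ψ := exp (((t : ℂ) / 2) • s) * φ * exp ((-((t : ℂ) / 2)) • s) with hψ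
  apply Complex.conj_eq_iff_im.mp
  have hC : ((ψ * ψᴴ - ψᴴ * ψ) * s)ᴴ = s * (ψ * ψᴴ - ψᴴ * ψ) := by
    simp [conjTranspose_mul, Matrix.conjTranspose_sub, hs.eq, Matrix.mul_sub, Matrix.sub_mul]
  calc (starRingEnd ℂ) (((ψ * ψᴴ - ψᴴ * ψ) * s).trace)
      = (((ψ * ψᴴ - ψᴴ * ψ) * s)ᴴ).trace := (Matrix.trace_conjTranspose _).symm
    _ = (s * (ψ * ψᴴ - ψᴴ * ψ)).trace := by rw [hC]
    _ = ((ψ * ψᴴ - ψᴴ * ψ) * s).trace := Matrix.trace_mul_comm _ _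

/-- differentiability, with the raw form of the derivative. -/
private lemma zeta_hasDerivAt (φ s : Matrix (Fin n) (Fin n) ℂ) (t : ℝ) :
    HasDerivAt (fun t : ℝ =>
      ((φ * (exp ((-(t : ℂ)) • s) * φᴴ * exp ((t : ℂ) • s))
          - (exp ((-(t : ℂ)) • s) * φᴴ * exp ((t : ℂ) • s)) * φ) * s).trace)
      (((φ * (-(s * exp ((-(t : ℂ)) • s)) * φᴴ * exp ((t : ℂ) • s)
            + exp ((-(t : ℂ)) • s) * φᴴ * (s * exp ((t : ℂ) • s)))
        - (-(s * exp ((-(t : ℂ)) • s)) * φᴴ * exp ((t : ℂ) • s)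
            + exp ((-(t : ℂ)) • s) * φᴴ * (s * exp ((t : ℂ) • s))) * φ) * s).trace) t := by
  letI : SeminormedRing (Matrix (Fin n) (Fin n) ℂ) := Matrix.linftyOpSemiNormedRing
  letI : NormedRing (Matrix (Fin n) (Fin n) ℂ) := Matrix.linftyOpNormedRing
  letI : NormedAlgebra ℂ (Matrix (Fin n) (Fin n) ℂ) := Matrix.linftyOpNormedAlgebra
  letI : NormedAlgebra ℝ (Matrix (Fin n) (Fin n) ℂ) := Matrix.linftyOpNormedAlgebra
  have h1 : HasDerivAt (fun t : ℝ => exp ((t : ℂ) • s)) (s * exp ((t : ℂ) • s)) t := by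
    have ha : HasDerivAt (fun u : ℂ => exp (u • s)) (s * exp ((t : ℂ) • s)) (t : ℂ) :=
      hasDerivAt_exp_smul_const' s (t : ℂ)
    have hb : HasDerivAt (fun y : ℝ => (y : ℂ)) 1 t := Complex.ofRealCLM.hasDerivAt
    have h := ha.scomp t hb
    simp only [one_smul] at h
    exact h
  have h2 : HasDerivAt (fun t : ℝ => exp ((-(t : ℂ)) • s))
      (-(s * exp ((-(t : ℂ)) • s))) t := by
    have ha : HasDerivAt (fun u : ℂ => exp (u • (-s))) ((-s) * exp ((t : ℂ) • (-s))) (t : ℂ) :=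
      hasDerivAt_exp_smul_const' (-s) (t : ℂ)
    have hb : HasDerivAt (fun y : ℝ => (y : ℂ)) 1 t := Complex.ofRealCLM.hasDerivAt
    have h := ha.scomp t hb
    simp only [smul_neg, ← neg_smul, one_smul, neg_mul] at h
    exact h
  have hmder : HasDerivAt (fun t : ℝ => exp ((-(t : ℂ)) • s) * φᴴ * exp ((t : ℂ) • s))
      (-(s * exp ((-(t : ℂ)) • s)) * φᴴ * exp ((t : ℂ) • s)
        + exp ((-(t : ℂ)) • s) * φᴴ * (s * exp ((t : ℂ) • s))) t :=
    (h2.mul_const φᴴ).mul h1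
  have hF := ((hmder.const_mul φ).sub (hmder.mul_const φ)).mul_const s
  let L : Matrix (Fin n) (Fin n) ℂ →L[ℂ] ℂ :=
    LinearMap.toContinuousLinearMap (Matrix.traceLinearMap (Fin n) ℂ ℂ)
  have hζ := (L.restrictScalars ℝ).hasFDerivAt.comp_hasDerivAt t hF
  exact hζ

/-- value of the derivative. -/
private lemma deriv_value_eq (φ s : Matrix (Fin n) (Fin n) ℂ) (hs : s.IsHermitian) (t : ℝ) :
    ((φ * (-(s * exp ((-(t : ℂ)) • s)) * φᴴ * exp ((t : ℂ) • s)
          + exp ((-(t : ℂ)) • s) * φᴴ * (s * exp ((t : ℂ) • s)))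
      - (-(s * exp ((-(t : ℂ)) • s)) * φᴴ * exp ((t : ℂ) • s)
          + exp ((-(t : ℂ)) • s) * φᴴ * (s * exp ((t : ℂ) • s))) * φ) * s).trace
    = ((frobSq (s * (exp (((t : ℂ) / 2) • s) * φ * exp ((-((t : ℂ) / 2)) • s)) -
          (exp (((t : ℂ) / 2) • s) * φ * exp ((-((t : ℂ) / 2)) • s)) * s) : ℝ) : ℂ) := by
  set f := exp (((t : ℂ) / 2) • s) with hf
  set g := exp ((-((t : ℂ) / 2)) • s) with hg
  set ep := exp ((t : ℂ) • s) with hep'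
  set em := exp ((-(t : ℂ)) • s) with hem'
  have hfg : f * g = 1 := exp_smul_mul_exp_neg_smul s _
  have hgf : g * f = 1 := exp_neg_smul_mul_exp_smul s _
  have hsf : s * f = f * s := smul_comm_exp s _
  have hsg : s * g = g * s := smul_comm_exp s _
  have hsep : s * ep = ep * s := smul_comm_exp s _
  have hfH : fᴴ = f := exp_smul_conjTranspose s hs _ (by simp)
  have hgH : gᴴ = g := exp_smul_conjTranspose s hs _ (by simp)
  set ψ := f * φ * g with hψ
  have hψH : ψᴴ = g * φᴴ * f := by
    rw [hψ]
    simp [conjTranspose_mul, hfH, hgH, mul_assoc]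
  have hep : ep = f * f := by
    have h : (t : ℂ) = (t : ℂ) / 2 + (t : ℂ) / 2 := by ring
    rw [hep']
    conv_lhs => rw [h]
    rw [exp_smul_add, ← hf]
  have hem : em = g * g := by
    have h : (-(t : ℂ)) = -((t : ℂ) / 2) + -((t : ℂ) / 2) := by ring
    rw [hem']
    conv_lhs => rw [h]
    rw [exp_smul_add, ← hg]
  have hφ : φ = g * ψ * f := by
    rw [hψ]
    calc φ = (g * f) * φ * (g * f) := by rw [hgf]; simp
      _ = g * (f * φ * g) * f := by simp [mul_assoc]
  have hm : em * φᴴ * ep = g * ψᴴ * f := by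
    rw [hψH, hem, hep]
    simp [mul_assoc]
  set m := em * φᴴ * ep with hm'
  -- step 1: rewrite the derivative bracket as m * s - s * m
  have hD : -(s * em) * φᴴ * ep + em * φᴴ * (s * ep) = m * s - s * m := by
    rw [hsep, hm']
    simp only [neg_mul, mul_assoc]
    abel
  rw [hD]
  -- step 2: conjugate by f, g
  have hmm : m * s - s * m = g * (ψᴴ * s - s * ψᴴ) * f := by
    rw [hm]
    have e1 : (g * ψᴴ * f) * s = g * (ψᴴ * s) * f := by
      calc (g * ψᴴ * f) * s = g * ψᴴ * (f * s) := by rw [mul_assoc]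
        _ = g * ψᴴ * (s * f) := by rw [hsf]
        _ = g * (ψᴴ * s) * f := by simp [mul_assoc]
    have e2 : s * (g * ψᴴ * f) = g * (s * ψᴴ) * f := by
      calc s * (g * ψᴴ * f) = (s * g) * (ψᴴ * f) := by simp [mul_assoc]
        _ = (g * s) * (ψᴴ * f) := by rw [hsg]
        _ = g * (s * ψᴴ) * f := by simp [mul_assoc]
    rw [e1, e2]
    simp [Matrix.mul_sub, Matrix.sub_mul]
  have collapse : ∀ X Y : Matrix (Fin n) (Fin n) ℂ,
      (g * X * f) * (g * Y * f) = g * (X * Y) * f := by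
    intro X Y
    calc (g * X * f) * (g * Y * f) = g * X * (f * g) * (Y * f) := by simp [mul_assoc]
      _ = g * (X * Y) * f := by rw [hfg]; simp [mul_assoc]
  rw [hmm, hφ]
  rw [collapse, collapse, show g * (ψ * (ψᴴ * s - s * ψᴴ)) * f - g * ((ψᴴ * s - s * ψᴴ) * ψ) * f
      = g * (ψ * (ψᴴ * s - s * ψᴴ) - (ψᴴ * s - s * ψᴴ) * ψ) * f by
        simp [Matrix.mul_sub, Matrix.sub_mul]]
  rw [conj_trace _ _ _ _ hfg hsf]
  -- step 3: the commutator identity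
  rw [key2' ψ ψᴴ s]
  -- step 4: recognize a Frobenius norm
  have hCH : (s * ψ - ψ * s)ᴴ = ψᴴ * s - s * ψᴴ := by
    simp [Matrix.conjTranspose_sub, conjTranspose_mul, hs.eq]
  rw [← hCH, trace_self_mul_conjTranspose]

end main

/-- let `φ` be an `n × n` complex matrix and let `s` be a Hermitian
`n × n` complex matrix. Then the function
`ζ(t) = Tr([φ, exp(-t·s)·φᴴ·exp(t·s)]·s)` is real-valued and differentiable on `ℝ`,
for every `t` its derivative equals `‖[s, exp(t·s/2)·φ·exp(-t·s/2)]‖_F²`, and in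
particular `ζ` is nondecreasing on `ℝ` (as a real-valued function). -/
theorem trace_comm_exp_real_differentiable_deriv_monotone {n : ℕ}
    (φ s : Matrix (Fin n) (Fin n) ℂ) (hs : s.IsHermitian) :
    (∀ t : ℝ,
      (((φ * (NormedSpace.exp ((-(t : ℂ)) • s) * φᴴ * NormedSpace.exp ((t : ℂ) • s))
          - (NormedSpace.exp ((-(t : ℂ)) • s) * φᴴ * NormedSpace.exp ((t : ℂ) • s)) * φ)
          * s).trace).im = 0) ∧
    Differentiable ℝ (fun t : ℝ =>
      ((φ * (NormedSpace.exp ((-(t : ℂ)) • s) * φᴴ * NormedSpace.exp ((t : ℂ) • s))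
          - (NormedSpace.exp ((-(t : ℂ)) • s) * φᴴ * NormedSpace.exp ((t : ℂ) • s)) * φ)
          * s).trace) ∧
    (∀ t : ℝ,
      deriv (fun t : ℝ =>
        ((φ * (NormedSpace.exp ((-(t : ℂ)) • s) * φᴴ * NormedSpace.exp ((t : ℂ) • s))
            - (NormedSpace.exp ((-(t : ℂ)) • s) * φᴴ * NormedSpace.exp ((t : ℂ) • s)) * φ)
            * s).trace) t =
        (frobSq (s * (NormedSpace.exp (((t : ℂ) / 2) • s) * φ *
            NormedSpace.exp ((-((t : ℂ) / 2)) • s)) -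
          (NormedSpace.exp (((t : ℂ) / 2) • s) * φ *
            NormedSpace.exp ((-((t : ℂ) / 2)) • s)) * s) : ℝ)) ∧
    Monotone (fun t : ℝ =>
      (((φ * (NormedSpace.exp ((-(t : ℂ)) • s) * φᴴ * NormedSpace.exp ((t : ℂ) • s))
          - (NormedSpace.exp ((-(t : ℂ)) • s) * φᴴ * NormedSpace.exp ((t : ℂ) • s)) * φ)
          * s).trace).re) := by
  have main : ∀ t : ℝ, HasDerivAt (fun t : ℝ =>
      ((φ * (NormedSpace.exp ((-(t : ℂ)) • s) * φᴴ * NormedSpace.exp ((t : ℂ) • s))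
          - (NormedSpace.exp ((-(t : ℂ)) • s) * φᴴ * NormedSpace.exp ((t : ℂ) • s)) * φ)
          * s).trace)
      (((frobSq (s * (NormedSpace.exp (((t : ℂ) / 2) • s) * φ *
            NormedSpace.exp ((-((t : ℂ) / 2)) • s)) -
          (NormedSpace.exp (((t : ℂ) / 2) • s) * φ *
            NormedSpace.exp ((-((t : ℂ) / 2)) • s)) * s) : ℝ)) : ℂ) t := by
    intro t
    have h := zeta_hasDerivAt φ s t
    rwa [deriv_value_eq φ s hs t] at h
  refine ⟨zeta_im φ s hs, fun t => (main t).differentiableAt, fun t => (main t).deriv, ?_⟩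
  have hre : ∀ t : ℝ, HasDerivAt (fun t : ℝ =>
      (((φ * (NormedSpace.exp ((-(t : ℂ)) • s) * φᴴ * NormedSpace.exp ((t : ℂ) • s))
          - (NormedSpace.exp ((-(t : ℂ)) • s) * φᴴ * NormedSpace.exp ((t : ℂ) • s)) * φ)
          * s).trace).re)
      ((frobSq (s * (NormedSpace.exp (((t : ℂ) / 2) • s) * φ *
            NormedSpace.exp ((-((t : ℂ) / 2)) • s)) -
          (NormedSpace.exp (((t : ℂ) / 2) • s) * φ *
            NormedSpace.exp ((-((t : ℂ) / 2)) • s)) * s) : ℝ)) t := by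
    intro t
    simpa [Function.comp_def] using Complex.reCLM.hasFDerivAt.comp_hasDerivAt t (main t)
  exact monotone_of_deriv_nonneg (fun t => (hre t).differentiableAt)
    (fun t => by rw [(hre t).deriv]; exact frobSq_nonneg' _)
end

section
/- Let φ be an n × n complex matrix and let s be a Hermitian n × n complex matrix. Then Tr([φ, exp(−s)·φ*·exp(s) − φ*]·s) is a nonnegative real number. -/
open Matrix


private lemma x_exp_nonneg (x : ℝ) : 0 ≤ x * (Real.exp x - 1) := by
  rcases le_or_gt 0 x with h | h
  · exact mul_nonneg h (by nlinarith [Real.add_one_le_exp x])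
  · have h1 : Real.exp x < 1 := Real.exp_lt_one_iff.mpr h
    nlinarith

private lemma key_diag {n : ℕ} (a : Fin n → ℝ) (ψ : Matrix (Fin n) (Fin n) ℂ) :
    ((ψ * (Matrix.diagonal (fun i => Complex.exp (-(a i : ℂ))) * ψᴴ *
        Matrix.diagonal (fun i => Complex.exp ((a i : ℂ))) - ψᴴ)
      - (Matrix.diagonal (fun i => Complex.exp (-(a i : ℂ))) * ψᴴ *
        Matrix.diagonal (fun i => Complex.exp ((a i : ℂ))) - ψᴴ) * ψ)
      * Matrix.diagonal (fun i => (a i : ℂ))).trace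
    = ((∑ i, ∑ j, Complex.normSq (ψ i j) * ((a i - a j) * (Real.exp (a i - a j) - 1)) : ℝ) : ℂ) := by
  set B : Matrix (Fin n) (Fin n) ℂ :=
    Matrix.diagonal (fun i => Complex.exp (-(a i : ℂ))) * ψᴴ *
      Matrix.diagonal (fun i => Complex.exp ((a i : ℂ))) - ψᴴ with hBdef
  have hB : ∀ i j, B i j = (Complex.exp ((a j : ℂ) - (a i : ℂ)) - 1) * (starRingEnd ℂ) (ψ j i) := by
    intro i j
    simp only [hBdef, Matrix.sub_apply, Matrix.mul_diagonal, Matrix.diagonal_mul,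
      Matrix.conjTranspose_apply]
    rw [Complex.exp_sub, Complex.exp_neg]
    have h := Complex.exp_ne_zero ((a i : ℂ))
    field_simp
    simp only [Complex.star_def]
    ring
  calc ((ψ * B - B * ψ) * Matrix.diagonal (fun i => (a i : ℂ))).trace
      = ∑ i, ((∑ j, ψ i j * B j i) - ∑ j, B i j * ψ j i) * (a i : ℂ) := by
        simp [Matrix.trace, Matrix.mul_apply, Matrix.diagonal_apply, Matrix.sub_apply, mul_ite, mul_zero]
    _ = (∑ i, ∑ j, ψ i j * B j i * (a i : ℂ)) - ∑ i, ∑ j, B i j * ψ j i * (a i : ℂ) := by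
        simp [sub_mul, Finset.sum_mul, Finset.sum_sub_distrib]
    _ = (∑ i, ∑ j, ψ i j * B j i * (a i : ℂ)) - ∑ i, ∑ j, B j i * ψ i j * (a j : ℂ) := by
        congr 1
        rw [Finset.sum_comm]
    _ = ∑ i, ∑ j, (ψ i j * B j i * (a i : ℂ) - B j i * ψ i j * (a j : ℂ)) := by
        simp [Finset.sum_sub_distrib]
    _ = _ := by
        push_cast
        refine Finset.sum_congr rfl fun i _ => Finset.sum_congr rfl fun j _ => ?_
        rw [hB]
        linear_combination (((a i : ℂ) - (a j : ℂ)) * (Complex.exp ((a i : ℂ) - (a j : ℂ)) - 1)) *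
          Complex.mul_conj (ψ i j)


private lemma exp_unitary_conj {n : ℕ} (V A : Matrix (Fin n) (Fin n) ℂ)
    (hV1 : Vᴴ * V = 1) (hV2 : V * Vᴴ = 1) :
    NormedSpace.exp (V * A * Vᴴ) = V * NormedSpace.exp A * Vᴴ := by
  have hU : IsUnit V := ⟨⟨V, Vᴴ, hV2, hV1⟩, rfl⟩
  have hinv : V⁻¹ = Vᴴ := Matrix.inv_eq_right_inv hV2
  rw [← hinv, Matrix.exp_conj V A hU, hinv]

private lemma exp_diag' {n : ℕ} (v : Fin n → ℂ) :
    NormedSpace.exp (Matrix.diagonal v) = Matrix.diagonal (fun i => Complex.exp (v i)) := by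
  rw [Matrix.exp_diagonal, Pi.exp_def]
  simp [Complex.exp_eq_exp_ℂ]

/-- let `φ` be an `n × n` complex matrix and let `s` be a Hermitian
`n × n` complex matrix. Then `Tr([φ, exp(-s)·φᴴ·exp(s) - φᴴ]·s)` is a nonnegative
real number. -/
theorem trace_comm_exp_sub_nonneg_real {n : ℕ}
    (φ s : Matrix (Fin n) (Fin n) ℂ) (hs : s.IsHermitian) :
    (((φ * (NormedSpace.exp (-s) * φᴴ * NormedSpace.exp s - φᴴ)
        - (NormedSpace.exp (-s) * φᴴ * NormedSpace.exp s - φᴴ) * φ) * s).trace).im = 0 ∧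
    0 ≤ (((φ * (NormedSpace.exp (-s) * φᴴ * NormedSpace.exp s - φᴴ)
        - (NormedSpace.exp (-s) * φᴴ * NormedSpace.exp s - φᴴ) * φ) * s).trace).re := by
  classical
  set V : Matrix (Fin n) (Fin n) ℂ := (hs.eigenvectorUnitary : Matrix (Fin n) (Fin n) ℂ) with hVdef
  have hV1 : Vᴴ * V = 1 := by
    simpa [Matrix.star_eq_conjTranspose] using
      Matrix.mem_unitaryGroup_iff'.mp hs.eigenvectorUnitary.2
  have hV2 : V * Vᴴ = 1 := by
    simpa [Matrix.star_eq_conjTranspose] using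
      Matrix.mem_unitaryGroup_iff.mp hs.eigenvectorUnitary.2
  set a : Fin n → ℝ := hs.eigenvalues with ha
  have hspec : s = V * Matrix.diagonal (fun i => (a i : ℂ)) * Vᴴ := by
    have := hs.spectral_theorem
    simpa [Function.comp_def, Matrix.star_eq_conjTranspose, ha, hVdef] using this
  set ψ : Matrix (Fin n) (Fin n) ℂ := Vᴴ * φ * V with hψdef
  have hφ : φ = V * ψ * Vᴴ := by
    rw [hψdef]
    calc φ = (V * Vᴴ) * φ * (V * Vᴴ) := by rw [hV2]; simp
    _ = V * (Vᴴ * φ * V) * Vᴴ := by simp only [Matrix.mul_assoc]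
  have hφH : φᴴ = V * ψᴴ * Vᴴ := by
    rw [hφ]
    simp only [Matrix.conjTranspose_mul, Matrix.conjTranspose_conjTranspose, Matrix.mul_assoc]
  have hexps : NormedSpace.exp s = V * Matrix.diagonal (fun i => Complex.exp ((a i : ℂ))) * Vᴴ := by
    rw [hspec, exp_unitary_conj _ _ hV1 hV2, exp_diag']
  have hexpn : NormedSpace.exp (-s) =
      V * Matrix.diagonal (fun i => Complex.exp (-(a i : ℂ))) * Vᴴ := by
    have h1 : -s = V * Matrix.diagonal (fun i => (-(a i : ℂ))) * Vᴴ := by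
      have hd : Matrix.diagonal (fun i => (-(a i : ℂ)))
          = -Matrix.diagonal (fun i => ((a i : ℂ))) := by
        rw [← Matrix.diagonal_neg]
      rw [hd, hspec]
      simp only [Matrix.mul_neg, Matrix.neg_mul]
    rw [h1, exp_unitary_conj _ _ hV1 hV2, exp_diag']
  have hmul : ∀ A B : Matrix (Fin n) (Fin n) ℂ, (V * A * Vᴴ) * (V * B * Vᴴ) = V * (A * B) * Vᴴ := by
    intro A B
    simp only [Matrix.mul_assoc]
    rw [← Matrix.mul_assoc Vᴴ V, hV1, Matrix.one_mul]
  have hsub : ∀ A B : Matrix (Fin n) (Fin n) ℂ,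
      (V * A * Vᴴ) - (V * B * Vᴴ) = V * (A - B) * Vᴴ := by
    intro A B
    rw [Matrix.mul_sub, Matrix.sub_mul]
  rw [hexps, hexpn, hφH]
  rw [hφ]
  rw [hspec]
  simp only [hmul, hsub]
  rw [Matrix.trace_mul_comm, ← Matrix.mul_assoc, hV1, Matrix.one_mul]
  rw [key_diag a ψ]
  refine ⟨Complex.ofReal_im _, ?_⟩
  rw [Complex.ofReal_re]
  refine Finset.sum_nonneg fun i _ => Finset.sum_nonneg fun j _ => ?_
  exact mul_nonneg (Complex.normSq_nonneg _) (x_exp_nonneg _)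
end

section
/- Let s : ℝ → M_n(ℂ) be a differentiable matrix-valued function. Then the function t ↦ exp(s(t)) is differentiable, and for every t ∈ ℝ one has Tr( exp(−s(t)) · (d/dt exp(s(t))) · s(t) ) = Tr( s(t) · s'(t) ). -/
set_option maxHeartbeats 1000000

open Matrix NormedSpace Nat

namespace TraceExpAux

attribute [local instance] Matrix.linftyOpNormedAddCommGroup Matrix.linftyOpNormedSpace
  Matrix.linftyOpNormedRing Matrix.linftyOpNormedAlgebra

variable {n : ℕ}

@[reducible] noncomputable def iACG : AddCommGroup (Matrix (Fin n) (Fin n) ℂ) :=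
  Matrix.linftyOpNormedAddCommGroup.toAddCommGroup
@[reducible] noncomputable def iTop : TopologicalSpace (Matrix (Fin n) (Fin n) ℂ) :=
  Matrix.linftyOpNormedAddCommGroup.toUniformSpace.toTopologicalSpace
@[reducible] noncomputable def iModC : Module ℂ (Matrix (Fin n) (Fin n) ℂ) :=
  Matrix.linftyOpNormedSpace.toModule
@[reducible] noncomputable def iModR : Module ℝ (Matrix (Fin n) (Fin n) ℂ) :=
  Matrix.linftyOpNormedSpace.toModule
attribute [local instance] iACG iTop iModC iModR

noncomputable def L1 (A : Matrix (Fin n) (Fin n) ℂ) : Matrix (Fin n) (Fin n) ℂ →L[ℂ] ℂ :=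
  LinearMap.toContinuousLinearMap
    { toFun := fun X => (X * A).trace
      map_add' := fun X Y => by simp [Matrix.add_mul]
      map_smul' := fun c X => by simp [Matrix.smul_mul] }

@[simp] lemma L1_apply (A X : Matrix (Fin n) (Fin n) ℂ) : L1 A X = (X * A).trace := rfl

noncomputable def L2 (B : Matrix (Fin n) (Fin n) ℂ) : Matrix (Fin n) (Fin n) ℂ →L[ℂ] ℂ :=
  LinearMap.toContinuousLinearMap
    { toFun := fun X => (B * X).trace
      map_add' := fun X Y => by simp [Matrix.mul_add]
      map_smul' := fun c X => by simp [Matrix.mul_smul] }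

@[simp] lemma L2_apply (B X : Matrix (Fin n) (Fin n) ℂ) : L2 B X = (B * X).trace := rfl

theorem norm_one_le : ‖(1 : Matrix (Fin n) (Fin n) ℂ)‖ ≤ 1 := by
  cases n with
  | zero =>
      have : (1 : Matrix (Fin 0) (Fin 0) ℂ) = 0 := Subsingleton.elim _ _
      rw [this, norm_zero]; exact zero_le_one
  | succ m =>
      haveI : NormOneClass (Matrix (Fin (m+1)) (Fin (m+1)) ℂ) :=
        Matrix.linfty_opNormOneClass
      exact norm_one.le

theorem hasDerivAt_pow_path (x₀ v : Matrix (Fin n) (Fin n) ℂ) (k : ℕ) (t : ℝ) :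
    HasDerivAt (fun u : ℝ => (x₀ + u • v) ^ k)
      (∑ j ∈ Finset.range k,
        (x₀ + t • v) ^ j * v * (x₀ + t • v) ^ (k - 1 - j)) t := by
  induction k with
  | zero => simpa using hasDerivAt_const t (1 : Matrix (Fin n) (Fin n) ℂ)
  | succ k ih =>
      have hp : HasDerivAt (fun u : ℝ => x₀ + u • v) v t := by
        simpa using ((hasDerivAt_id t).smul_const v).const_add x₀
      have h2 := ih.mul hp
      have h3 : (fun u : ℝ => (x₀ + u • v) ^ (k + 1))
          = fun u : ℝ => (x₀ + u • v) ^ k * (x₀ + u • v) := by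
        funext u; rw [pow_succ]
      rw [h3]
      convert h2 using 1
      case e'_4 => rfl
      case e'_8 => rfl
      rw [Finset.sum_range_succ, Finset.sum_mul]
      have : ∀ j ∈ Finset.range k,
          (x₀ + t • v) ^ j * v * (x₀ + t • v) ^ (k + 1 - 1 - j)
            = (x₀ + t • v) ^ j * v * (x₀ + t • v) ^ (k - 1 - j) * (x₀ + t • v) := by
        intro j hj
        rw [Finset.mem_range] at hj
        rw [mul_assoc _ _ (x₀ + t • v), ← pow_succ]
        congr 2
        omega
      rw [Finset.sum_congr rfl this]
      congr 1
      simp [pow_succ]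

theorem key_path (x₀ v A : Matrix (Fin n) (Fin n) ℂ) (hA : Commute x₀ A) :
    HasDerivAt (fun z : ℝ => (exp (x₀ + z • v) * A).trace)
      ((v * A * exp x₀).trace) 0 := by
  classical
  set L : Matrix (Fin n) (Fin n) ℂ →L[ℂ] ℂ := L1 A with hL
  set C : ℝ := max (‖x₀‖ + ‖v‖) 1 with hCdef
  have hC1 : (1:ℝ) ≤ C := le_max_right _ _
  have hC0 : (0:ℝ) ≤ C := zero_le_one.trans hC1
  set g : ℕ → ℝ → ℂ := fun k z => (k ! : ℂ)⁻¹ • L ((x₀ + z • v) ^ k) with hg_def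
  set g' : ℕ → ℝ → ℂ := fun k z => (k ! : ℂ)⁻¹ •
      L (∑ j ∈ Finset.range k, (x₀ + z • v) ^ j * v * (x₀ + z • v) ^ (k - 1 - j)) with hg'_def
  set u : ℕ → ℝ := fun k => ‖L‖ * ‖v‖ * ((2*C) ^ k / k !) with hu_def
  have hu : Summable u := (Real.summable_pow_div_factorial (2*C)).mul_left _
  have hg : ∀ k z, HasDerivAt (g k) (g' k z) z := by
    intro k z
    exact (((L.restrictScalars ℝ).hasFDerivAt.comp_hasDerivAt z
      (hasDerivAt_pow_path x₀ v k z)).const_smul ((k ! : ℂ)⁻¹))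
  have hnormfac : ∀ k : ℕ, ‖((k ! : ℂ))⁻¹‖ = ((k ! : ℝ))⁻¹ := by
    intro k
    rw [norm_inv]
    norm_num
  have hpnorm : ∀ z ∈ Set.Ioo (-1:ℝ) 1, ‖x₀ + z • v‖ ≤ C := by
    intro z hz
    have hz1 : |z| ≤ 1 := abs_le.2 ⟨hz.1.le, hz.2.le⟩
    calc ‖x₀ + z • v‖ ≤ ‖x₀‖ + ‖z • v‖ := norm_add_le _ _
      _ = ‖x₀‖ + |z| * ‖v‖ := by rw [norm_smul, Real.norm_eq_abs]
      _ ≤ ‖x₀‖ + 1 * ‖v‖ := by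
          have := norm_nonneg v
          nlinarith
      _ ≤ C := by rw [one_mul]; exact le_max_left _ _
  have hpowle : ∀ (X : Matrix (Fin n) (Fin n) ℂ), ‖X‖ ≤ C → ∀ m : ℕ, ‖X ^ m‖ ≤ C ^ m := by
    intro X hX m
    induction m with
    | zero => rw [pow_zero, pow_zero]; exact norm_one_le
    | succ m ih =>
        rw [pow_succ, pow_succ]
        exact (norm_mul_le _ _).trans (mul_le_mul ih hX (norm_nonneg _) (pow_nonneg hC0 _))
  have hg' : ∀ k z, z ∈ Set.Ioo (-1:ℝ) 1 → ‖g' k z‖ ≤ u k := by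
    intro k z hz
    have hp := hpnorm z hz
    set S := ∑ j ∈ Finset.range k, (x₀ + z • v) ^ j * v * (x₀ + z • v) ^ (k - 1 - j) with hS
    have hterm : ∀ j ∈ Finset.range k,
        ‖(x₀ + z • v) ^ j * v * (x₀ + z • v) ^ (k - 1 - j)‖ ≤ ‖v‖ * C ^ (k-1) := by
      intro j hj
      rw [Finset.mem_range] at hj
      calc ‖(x₀ + z • v) ^ j * v * (x₀ + z • v) ^ (k - 1 - j)‖
          ≤ ‖(x₀ + z • v) ^ j * v‖ * ‖(x₀ + z • v) ^ (k - 1 - j)‖ := norm_mul_le _ _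
        _ ≤ (‖(x₀ + z • v) ^ j‖ * ‖v‖) * ‖(x₀ + z • v) ^ (k - 1 - j)‖ := by
            gcongr; exact norm_mul_le _ _
        _ ≤ (C ^ j * ‖v‖) * C ^ (k - 1 - j) := by
            gcongr <;> [exact hpowle _ hp j; exact hpowle _ hp (k-1-j)]
        _ = ‖v‖ * (C ^ j * C ^ (k - 1 - j)) := by ring
        _ = ‖v‖ * C ^ (k - 1) := by rw [← pow_add]; congr 2; omega
    have hsum : ‖L S‖ ≤ ‖L‖ * (k * (‖v‖ * C ^ (k-1))) := by
      refine (L.le_opNorm _).trans ?_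
      have : ‖S‖ ≤ (k : ℝ) * (‖v‖ * C ^ (k-1)) := by
        calc ‖S‖ ≤ ∑ j ∈ Finset.range k, ‖(x₀ + z • v) ^ j * v * (x₀ + z • v) ^ (k - 1 - j)‖ :=
              norm_sum_le _ _
          _ ≤ ∑ _j ∈ Finset.range k, (‖v‖ * C ^ (k-1)) := Finset.sum_le_sum hterm
          _ = k * (‖v‖ * C ^ (k-1)) := by
              rw [Finset.sum_const, Finset.card_range, nsmul_eq_mul]
      exact mul_le_mul_of_nonneg_left this (norm_nonneg _)
    have hkey : (k:ℝ) * C ^ (k-1) ≤ (2*C) ^ k := by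
      rw [mul_pow]
      have hk2 : (k:ℝ) ≤ 2 ^ k := by exact_mod_cast (Nat.lt_two_pow_self (n := k)).le
      have hCp : C ^ (k-1) ≤ C ^ k := pow_le_pow_right₀ hC1 (Nat.sub_le _ _)
      exact mul_le_mul hk2 hCp (pow_nonneg hC0 _) (pow_nonneg (by norm_num) _)
    have hmid : (k:ℝ) * (‖v‖ * C ^ (k-1)) ≤ ‖v‖ * (2*C)^k := by
      calc (k:ℝ) * (‖v‖ * C ^ (k-1)) = ‖v‖ * ((k:ℝ) * C ^ (k-1)) := by ring
        _ ≤ ‖v‖ * (2*C)^k := mul_le_mul_of_nonneg_left hkey (norm_nonneg v)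
    have hfacpos : (0:ℝ) < (k ! : ℝ) := by exact_mod_cast Nat.factorial_pos k
    have h1 : ‖g' k z‖ = ((k ! : ℝ))⁻¹ * ‖L S‖ := by
      rw [hg'_def]
      simp only [← hS, norm_smul, hnormfac]
    rw [h1]
    calc ((k ! : ℝ))⁻¹ * ‖L S‖
        ≤ ((k ! : ℝ))⁻¹ * (‖L‖ * (k * (‖v‖ * C ^ (k-1)))) :=
          mul_le_mul_of_nonneg_left hsum (by positivity)
      _ ≤ ((k ! : ℝ))⁻¹ * (‖L‖ * (‖v‖ * (2*C) ^ k)) :=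
          mul_le_mul_of_nonneg_left
            (mul_le_mul_of_nonneg_left hmid (norm_nonneg _)) (by positivity)
      _ = u k := by rw [hu_def]; field_simp
  have hg0 : Summable (fun k => g k 0) := by
    apply Summable.of_norm_bounded (g := fun k => ‖L‖ * (C ^ k / k !))
      ((Real.summable_pow_div_factorial C).mul_left _)
    intro k
    have hp0 : ‖x₀ + (0:ℝ) • v‖ ≤ C := hpnorm 0 (by norm_num)
    have hfacpos : (0:ℝ) < (k ! : ℝ) := by exact_mod_cast Nat.factorial_pos k
    have h1 : ‖g k 0‖ = ((k ! : ℝ))⁻¹ * ‖L ((x₀ + (0:ℝ) • v) ^ k)‖ := by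
      rw [hg_def]
      simp only [norm_smul, hnormfac]
    rw [h1]
    calc ((k ! : ℝ))⁻¹ * ‖L ((x₀ + (0:ℝ) • v) ^ k)‖
        ≤ ((k ! : ℝ))⁻¹ * (‖L‖ * C ^ k) := by
          refine mul_le_mul_of_nonneg_left ?_ (by positivity)
          exact (L.le_opNorm _).trans
            (mul_le_mul_of_nonneg_left (hpowle _ hp0 k) (norm_nonneg _))
      _ = ‖L‖ * (C ^ k / k !) := by rw [div_eq_mul_inv]; ring
  have h0mem : (0:ℝ) ∈ Set.Ioo (-1:ℝ) 1 := by norm_num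
  have H := hasDerivAt_tsum_of_isPreconnected hu isOpen_Ioo
    isPreconnected_Ioo (fun k y _ => hg k y) hg' h0mem hg0 h0mem
  -- identify the function
  have hfun : ∀ z : ℝ, (∑' k, g k z) = (exp (x₀ + z • v) * A).trace := by
    intro z
    rw [exp_eq_tsum (𝕂 := ℂ), ← L1_apply A, ← hL,
      L.map_tsum (expSeries_summable' (𝕂 := ℂ) (x₀ + z • v))]
    refine tsum_congr fun k => ?_
    rw [hg_def, _root_.map_smul]
  -- identify the derivative
  have hterm2 : ∀ k : ℕ, g' (k+1) 0 = L2 (v * A) ((k ! : ℂ)⁻¹ • x₀ ^ k) := by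
    intro k
    have hone : ∀ j ∈ Finset.range (k+1),
        L (x₀ ^ j * v * x₀ ^ (k + 1 - 1 - j)) = (v * A * x₀ ^ k).trace := by
      intro j hj
      rw [Finset.mem_range] at hj
      have hcomm : x₀ ^ (k + 1 - 1 - j) * A = A * x₀ ^ (k + 1 - 1 - j) :=
        (hA.pow_left _).eq
      rw [hL, L1_apply]
      calc ((x₀ ^ j * v * x₀ ^ (k + 1 - 1 - j)) * A).trace
          = ((x₀ ^ j * (v * (x₀ ^ (k + 1 - 1 - j) * A)))).trace := by
            rw [mul_assoc, mul_assoc]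
        _ = ((x₀ ^ j * (v * (A * x₀ ^ (k + 1 - 1 - j))))).trace := by rw [hcomm]
        _ = ((v * (A * x₀ ^ (k + 1 - 1 - j))) * x₀ ^ j).trace := trace_mul_comm _ _
        _ = (v * A * (x₀ ^ (k + 1 - 1 - j) * x₀ ^ j)).trace := by
            rw [mul_assoc, mul_assoc, mul_assoc]
        _ = (v * A * x₀ ^ k).trace := by
            rw [← pow_add]; congr 3; omega
    have hLsum : L (∑ j ∈ Finset.range (k+1), x₀ ^ j * v * x₀ ^ (k + 1 - 1 - j))
        = ((k:ℂ)+1) * (v * A * x₀ ^ k).trace := by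
      rw [map_sum, Finset.sum_congr rfl hone, Finset.sum_const, Finset.card_range,
        nsmul_eq_mul]
      push_cast
      ring
    have hx0 : ∀ (j : ℕ), (x₀ + (0:ℝ) • v) ^ j = x₀ ^ j := by
      intro j; rw [zero_smul, add_zero]
    have hlhs : g' (k+1) 0 = (((k+1)! : ℂ))⁻¹ * (((k:ℂ)+1) * (v * A * x₀ ^ k).trace) := by
      rw [hg'_def]
      simp only [hx0]
      rw [hLsum, smul_eq_mul]
    rw [hlhs, _root_.map_smul, L2_apply, smul_eq_mul]
    have hfs : ((k+1)! : ℂ) = ((k:ℂ)+1) * (k ! : ℂ) := by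
      rw [Nat.factorial_succ]
      push_cast
      ring
    have hk0 : ((k:ℂ)+1) ≠ 0 := Nat.cast_add_one_ne_zero k
    have hf0 : (k ! : ℂ) ≠ 0 := by
      exact_mod_cast Nat.cast_ne_zero.mpr (Nat.factorial_ne_zero k)
    rw [hfs, mul_inv]
    field_simp
  have hsum2 : Summable (fun k => L2 (v * A) ((k ! : ℂ)⁻¹ • x₀ ^ k)) := by
    exact (expSeries_summable' (𝕂 := ℂ) x₀).map (L2 (v * A)) (L2 (v * A)).continuous
  have hsumall : Summable (fun k => g' k 0) := by
    refine (summable_nat_add_iff 1).mp ?_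
    exact (summable_congr fun k => hterm2 k).mpr hsum2
  have htsum : (∑' k, g' k 0) = (v * A * exp x₀).trace := by
    rw [Summable.tsum_eq_zero_add hsumall]
    have hzero : g' 0 0 = 0 := by simp [hg'_def]
    rw [hzero, zero_add, tsum_congr hterm2,
      ← (L2 (v * A)).map_tsum (expSeries_summable' (𝕂 := ℂ) x₀)]
    have hexp : exp x₀ = ∑' k : ℕ, (k ! : ℂ)⁻¹ • x₀ ^ k := by rw [exp_eq_tsum (𝕂 := ℂ)]
    rw [← hexp, L2_apply]
  have Hfin : HasDerivAt (fun z : ℝ => (exp (x₀ + z • v) * A).trace) (∑' k, g' k 0) 0 :=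
    H.congr_of_eventuallyEq (Filter.Eventually.of_forall fun z => (hfun z).symm)
  rwa [htsum] at Hfin

noncomputable def entryCLM (i j : Fin n) : Matrix (Fin n) (Fin n) ℂ →L[ℂ] ℂ :=
  LinearMap.toContinuousLinearMap
    { toFun := fun X => X i j
      map_add' := fun _ _ => rfl
      map_smul' := fun _ _ => rfl }

theorem hasDerivAt_entry {f : ℝ → Matrix (Fin n) (Fin n) ℂ} {f' : Matrix (Fin n) (Fin n) ℂ}
    {t : ℝ} (hf : HasDerivAt f f' t) (i j : Fin n) :
    HasDerivAt (fun u => f u i j) (f' i j) t :=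
  (((entryCLM i j).restrictScalars ℝ).hasFDerivAt.comp_hasDerivAt t hf)

theorem hasDerivAt_matrix {f : ℝ → Matrix (Fin n) (Fin n) ℂ} {f' : Matrix (Fin n) (Fin n) ℂ}
    {t : ℝ} (hf : ∀ i j, HasDerivAt (fun u => f u i j) (f' i j) t) :
    HasDerivAt f f' t := by
  have h : HasDerivAt (fun u => ∑ i : Fin n, ∑ j : Fin n, single i j (f u i j))
      (∑ i : Fin n, ∑ j : Fin n, single i j (f' i j)) t := by
    refine HasDerivAt.fun_sum fun i _ => HasDerivAt.fun_sum fun j _ => ?_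
    have := (hf i j).smul_const (single i j (1:ℂ))
    simpa [smul_single] using this
  have h1 : (fun u => ∑ i : Fin n, ∑ j : Fin n, single i j (f u i j)) = f := by
    funext u; exact (matrix_eq_sum_single (f u)).symm
  have h2 : (∑ i : Fin n, ∑ j : Fin n, single i j (f' i j)) = f' :=
    (matrix_eq_sum_single f').symm
  rwa [h1, h2] at h

theorem exists_deriv_matrix (s s' : ℝ → Matrix (Fin n) (Fin n) ℂ)
    (hs : ∀ (t : ℝ) (i j : Fin n), HasDerivAt (fun u : ℝ => s u i j) (s' t i j) t) (u : ℝ) :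
    ∃ W : Matrix (Fin n) (Fin n) ℂ,
      (∀ i j, HasDerivAt (fun t : ℝ => exp (s t) i j) (W i j) u) ∧
      (∀ i j, HasDerivAt (fun z : ℝ => exp (s u + z • s' u) i j) (W i j) 0) := by
  have hdiff : DifferentiableAt ℝ (exp : Matrix (Fin n) (Fin n) ℂ → _) (s u) :=
    ((exp_analytic (𝕂 := ℂ) (s u)).differentiableAt).restrictScalars ℝ
  have h1 := hdiff.hasFDerivAt
  have hsM : HasDerivAt s (s' u) u := hasDerivAt_matrix (fun i j => hs u i j)
  have hq : HasDerivAt (fun z : ℝ => s u + z • s' u) (s' u) 0 := by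
    simpa using ((hasDerivAt_id (0:ℝ)).smul_const (s' u)).const_add (s u)
  refine ⟨fderiv ℝ (exp) (s u) (s' u), ?_, ?_⟩
  · intro i j
    exact hasDerivAt_entry (h1.comp_hasDerivAt u hsM) i j
  · intro i j
    have h1' : HasFDerivAt (exp) (fderiv ℝ (exp) (s u)) (s u + (0:ℝ) • s' u) := by
      simpa using h1
    exact hasDerivAt_entry (h1'.comp_hasDerivAt 0 hq) i j

end TraceExpAux

/-- let `s : ℝ → M_n(ℂ)` be a differentiable matrix-valued function
(differentiability taken entrywise, with entrywise derivative `s'`). Then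
`t ↦ exp(s(t))` is differentiable (entrywise), and for every `t` one has
`Tr( exp(-s(t)) · (d/dt exp(s(t))) · s(t) ) = Tr( s(t) · s'(t) )`. -/
theorem trace_exp_deriv_eq_trace_mul_deriv {n : ℕ}
    (s s' : ℝ → Matrix (Fin n) (Fin n) ℂ)
    (hs : ∀ (t : ℝ) (i j : Fin n), HasDerivAt (fun u : ℝ => s u i j) (s' t i j) t) :
    (∀ i j : Fin n, Differentiable ℝ (fun t : ℝ => NormedSpace.exp (s t) i j)) ∧
    (∀ t : ℝ,
      (NormedSpace.exp (-(s t)) *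
        (Matrix.of fun i j : Fin n => deriv (fun u : ℝ => NormedSpace.exp (s u) i j) t) *
        s t).trace = (s t * s' t).trace) := by
  constructor
  · intro i j t
    obtain ⟨W, h1, _⟩ := TraceExpAux.exists_deriv_matrix s s' hs t
    exact (h1 i j).differentiableAt
  · intro t
    obtain ⟨W, h1, h2⟩ := TraceExpAux.exists_deriv_matrix s s' hs t
    have hM : (Matrix.of fun i j : Fin n =>
        deriv (fun u : ℝ => NormedSpace.exp (s u) i j) t) = W := by
      ext i j
      exact (h1 i j).deriv
    rw [hM]
    set x₀ := s t with hx₀def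
    set v := s' t with hvdef
    set A := x₀ * NormedSpace.exp (-x₀) with hAdef
    have hA : Commute x₀ A :=
      (Commute.refl x₀).mul_right ((Commute.refl x₀).neg_right.exp_right)
    have h3 := TraceExpAux.key_path x₀ v A hA
    have h4 : HasDerivAt (fun z : ℝ => (NormedSpace.exp (x₀ + z • v) * A).trace)
        ((W * A).trace) 0 := by
      have hfun : ∀ z : ℝ, (∑ i : Fin n, ∑ k : Fin n, NormedSpace.exp (x₀ + z • v) i k * A k i)
          = (NormedSpace.exp (x₀ + z • v) * A).trace := by
        intro z; simp [Matrix.trace, Matrix.mul_apply, Matrix.diag]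
      have hW : (W * A).trace = ∑ i : Fin n, ∑ k : Fin n, W i k * A k i := by
        simp [Matrix.trace, Matrix.mul_apply, Matrix.diag]
      rw [hW]
      refine HasDerivAt.congr_of_eventuallyEq ?_
        (Filter.Eventually.of_forall fun z => (hfun z).symm)
      exact HasDerivAt.fun_sum fun i _ => HasDerivAt.fun_sum fun k _ => (h2 i k).mul_const (A k i)
    have huniq : (W * A).trace = (v * A * NormedSpace.exp x₀).trace := h4.unique h3
    have hinv : NormedSpace.exp (-x₀) * NormedSpace.exp x₀ = 1 := by
      rw [← Matrix.exp_add_of_commute (-x₀) x₀ ((Commute.refl x₀).neg_left),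
        neg_add_cancel, NormedSpace.exp_zero]
    have hassoc : v * A * NormedSpace.exp x₀
        = v * x₀ * (NormedSpace.exp (-x₀) * NormedSpace.exp x₀) := by
      rw [hAdef]; simp only [mul_assoc]
    calc (NormedSpace.exp (-x₀) * W * x₀).trace
        = (x₀ * NormedSpace.exp (-x₀) * W).trace := by
          rw [trace_mul_cycle]
      _ = (A * W).trace := by rw [hAdef]
      _ = (W * A).trace := trace_mul_comm _ _
      _ = (v * A * NormedSpace.exp x₀).trace := huniq
      _ = (v * x₀ * (NormedSpace.exp (-x₀) * NormedSpace.exp x₀)).trace := by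
          rw [hassoc]
      _ = (v * x₀).trace := by rw [hinv, mul_one]
      _ = (x₀ * v).trace := trace_mul_comm _ _
end

section
/- Let φ be an n × n complex matrix, let s be a Hermitian n × n complex matrix, and set g = exp(−s)·φ*·exp(s). Then Tr([φ, [g, s]]·s) = ‖[s, exp(s/2)·φ·exp(−s/2)]‖_F². -/
set_option maxHeartbeats 1600000

open Matrix


private lemma commute_exp' {n : ℕ} {x y : Matrix (Fin n) (Fin n) ℂ} (h : Commute x y) :
    Commute x (NormedSpace.exp y) := by
  letI : SeminormedRing (Matrix (Fin n) (Fin n) ℂ) := Matrix.linftyOpSemiNormedRing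
  letI : NormedRing (Matrix (Fin n) (Fin n) ℂ) := Matrix.linftyOpNormedRing
  letI : NormedAlgebra ℂ (Matrix (Fin n) (Fin n) ℂ) := Matrix.linftyOpNormedAlgebra
  exact h.exp_right

private lemma key_trace {n : ℕ} (φ a b s : Matrix (Fin n) (Fin n) ℂ)
    (hsa : s * a = a * s) (hbs : b * s = s * b) :
    ((φ * ((b * b * φᴴ * (a * a)) * s - s * (b * b * φᴴ * (a * a))) -
        ((b * b * φᴴ * (a * a)) * s - s * (b * b * φᴴ * (a * a))) * φ) * s).trace =
      ((s * (a * φ * b) - a * φ * b * s) * ((b * φᴴ * a) * s - s * (b * φᴴ * a))).trace := by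
  have hsa' : ∀ x : Matrix (Fin n) (Fin n) ℂ, x * s * a = x * a * s := fun x => by
    rw [mul_assoc, hsa, ← mul_assoc]
  have hbs' : ∀ x : Matrix (Fin n) (Fin n) ℂ, x * b * s = x * s * b := fun x => by
    rw [mul_assoc, hbs, ← mul_assoc]
  set G := b * b * φᴴ * (a * a) with hG
  have hL : (φ * (G * s - s * G) - (G * s - s * G) * φ) * s
      = φ * G * s * s - φ * s * G * s - G * s * φ * s + s * G * φ * s := by noncomm_ring
  have hR : (s * (a * φ * b) - a * φ * b * s) * ((b * φᴴ * a) * s - s * (b * φᴴ * a))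
      = s * (a * φ * b) * (b * φᴴ * a) * s - s * (a * φ * b) * s * (b * φᴴ * a)
        - a * φ * b * s * ((b * φᴴ * a) * s) + a * φ * b * s * (s * (b * φᴴ * a)) := by
    noncomm_ring
  have e1 : (φ * G * s * s).trace = (a * a * s * s * φ * b * b * φᴴ).trace := by
    rw [show φ * G * s * s = (φ * b * b * φᴴ) * (a * a * s * s) from by rw [hG]; noncomm_ring,
      Matrix.trace_mul_comm]
    congr 1; noncomm_ring
  have e2 : (φ * s * G * s).trace = (a * a * s * φ * s * b * b * φᴴ).trace := by
    rw [show φ * s * G * s = (φ * s * b * b * φᴴ) * (a * a * s) from by rw [hG]; noncomm_ring,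
      Matrix.trace_mul_comm]
    congr 1; noncomm_ring
  have e3 : (G * s * φ * s).trace = (a * a * s * φ * s * b * b * φᴴ).trace := by
    rw [show G * s * φ * s = (b * b * φᴴ) * (a * a * s * φ * s) from by rw [hG]; noncomm_ring,
      Matrix.trace_mul_comm]
    congr 1; noncomm_ring
  have e4 : (s * G * φ * s).trace = (a * a * φ * s * s * b * b * φᴴ).trace := by
    rw [show s * G * φ * s = (s * b * b * φᴴ) * (a * a * φ * s) from by rw [hG]; noncomm_ring,
      Matrix.trace_mul_comm]
    congr 1; noncomm_ring
  have f1 : (s * (a * φ * b) * (b * φᴴ * a) * s).trace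
      = (a * a * s * s * φ * b * b * φᴴ).trace := by
    rw [show s * (a * φ * b) * (b * φᴴ * a) * s = (s * a * φ * b * b * φᴴ) * (a * s) from by
      noncomm_ring, Matrix.trace_mul_comm]
    congr 1
    calc a * s * (s * a * φ * b * b * φᴴ) = a * s * s * a * φ * b * b * φᴴ := by noncomm_ring
      _ = a * a * s * s * φ * b * b * φᴴ := by rw [hsa' (a*s), hsa' a]
  have f2 : (s * (a * φ * b) * s * (b * φᴴ * a)).trace
      = (a * a * s * φ * s * b * b * φᴴ).trace := by
    rw [show s * (a * φ * b) * s * (b * φᴴ * a) = (s * a * φ * b * s * b * φᴴ) * a from by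
      noncomm_ring, Matrix.trace_mul_comm]
    congr 1
    calc a * (s * a * φ * b * s * b * φᴴ) = a * s * a * φ * b * s * b * φᴴ := by noncomm_ring
      _ = a * a * s * φ * s * b * b * φᴴ := by
          rw [hsa' a, hbs' (a * a * s * φ)]
  have f3 : (a * φ * b * s * ((b * φᴴ * a) * s)).trace
      = (a * a * s * φ * s * b * b * φᴴ).trace := by
    rw [show a * φ * b * s * ((b * φᴴ * a) * s) = (a * φ * b * s * b * φᴴ) * (a * s) from by
      noncomm_ring, Matrix.trace_mul_comm]
    congr 1
    calc a * s * (a * φ * b * s * b * φᴴ) = a * s * a * φ * b * s * b * φᴴ := by noncomm_ring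
      _ = a * a * s * φ * s * b * b * φᴴ := by
          rw [hsa' a, hbs' (a * a * s * φ)]
  have f4 : (a * φ * b * s * (s * (b * φᴴ * a))).trace
      = (a * a * φ * s * s * b * b * φᴴ).trace := by
    rw [show a * φ * b * s * (s * (b * φᴴ * a)) = (a * φ * b * s * s * b * φᴴ) * a from by
      noncomm_ring, Matrix.trace_mul_comm]
    congr 1
    calc a * (a * φ * b * s * s * b * φᴴ) = a * a * φ * b * s * s * b * φᴴ := by noncomm_ring
      _ = a * a * φ * s * s * b * b * φᴴ := by
          rw [hbs' (a * a * φ), hbs' (a * a * φ * s)]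
  rw [hL, hR]
  simp only [Matrix.trace_sub, Matrix.trace_add]
  rw [e1, e2, e3, e4, f1, f2, f3, f4]

theorem trace_double_comm_eq_frobSq' {n : ℕ}
    (φ s g : Matrix (Fin n) (Fin n) ℂ) (hs : s.IsHermitian)
    (hg : g = NormedSpace.exp (-s) * φᴴ * NormedSpace.exp s) :
    ((φ * (g * s - s * g) - (g * s - s * g) * φ) * s).trace =
      ((((s * (NormedSpace.exp ((2⁻¹ : ℂ) • s) * φ * NormedSpace.exp ((-(2⁻¹ : ℂ)) • s)) -
          (NormedSpace.exp ((2⁻¹ : ℂ) • s) * φ * NormedSpace.exp ((-(2⁻¹ : ℂ)) • s)) * s) *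
          (s * (NormedSpace.exp ((2⁻¹ : ℂ) • s) * φ * NormedSpace.exp ((-(2⁻¹ : ℂ)) • s)) -
          (NormedSpace.exp ((2⁻¹ : ℂ) • s) * φ * NormedSpace.exp ((-(2⁻¹ : ℂ)) • s)) * s)ᴴ).trace)) := by
  set a := NormedSpace.exp ((2⁻¹ : ℂ) • s) with ha
  set b := NormedSpace.exp ((-(2⁻¹ : ℂ)) • s) with hb
  have hsa : s * a = a * s := (commute_exp' ((Commute.refl s).smul_right _)).eq
  have hbs : b * s = s * b := (commute_exp' ((Commute.refl s).smul_right _)).symm.eq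
  have haH : aᴴ = a := by
    rw [ha, ← Matrix.exp_conjTranspose]
    congr 1
    rw [Matrix.conjTranspose_smul, hs.eq]
    norm_num
  have hbH : bᴴ = b := by
    rw [hb, ← Matrix.exp_conjTranspose]
    congr 1
    rw [Matrix.conjTranspose_smul, hs.eq]
    norm_num
  have haa : NormedSpace.exp s = a * a := by
    rw [show s = (2⁻¹ : ℂ) • s + (2⁻¹ : ℂ) • s from by module]
    exact Matrix.exp_add_of_commute _ _ (Commute.refl _)
  have hbb : NormedSpace.exp (-s) = b * b := by
    rw [show -s = (-(2⁻¹ : ℂ)) • s + (-(2⁻¹ : ℂ)) • s from by module]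
    exact Matrix.exp_add_of_commute _ _ (Commute.refl _)
  have hg' : g = b * b * φᴴ * (a * a) := by rw [hg, haa, hbb]
  have hC : (s * (a * φ * b) - a * φ * b * s)ᴴ = (b * φᴴ * a) * s - s * (b * φᴴ * a) := by
    simp only [Matrix.conjTranspose_sub, Matrix.conjTranspose_mul, haH, hbH, hs.eq]
    noncomm_ring
  rw [hg', hC]
  exact key_trace φ a b s hsa hbs

/-- let `φ` be an `n × n` complex matrix, `s` a Hermitian `n × n`
complex matrix, and `g = exp(−s)·φᴴ·exp(s)`.  Then
`Tr([φ, [g, s]]·s) = ‖[s, exp(s/2)·φ·exp(−s/2)]‖_F²`. -/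
theorem trace_double_comm_eq_frobSq {n : ℕ}
    (φ s g : Matrix (Fin n) (Fin n) ℂ) (hs : s.IsHermitian)
    (hg : g = NormedSpace.exp (-s) * φᴴ * NormedSpace.exp s) :
    ((φ * (g * s - s * g) - (g * s - s * g) * φ) * s).trace =
      ((frobSq
        (s * (NormedSpace.exp ((2⁻¹ : ℂ) • s) * φ * NormedSpace.exp ((-(2⁻¹ : ℂ)) • s)) -
          (NormedSpace.exp ((2⁻¹ : ℂ) • s) * φ * NormedSpace.exp ((-(2⁻¹ : ℂ)) • s)) * s)) :
        ℂ) := by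
  set C := s * (NormedSpace.exp ((2⁻¹ : ℂ) • s) * φ * NormedSpace.exp ((-(2⁻¹ : ℂ)) • s)) -
      (NormedSpace.exp ((2⁻¹ : ℂ) • s) * φ * NormedSpace.exp ((-(2⁻¹ : ℂ)) • s)) * s with hCdef
  have hreal : (starRingEnd ℂ) ((C * Cᴴ).trace) = (C * Cᴴ).trace := by
    have : (C * Cᴴ)ᴴ = C * Cᴴ := by
      rw [Matrix.conjTranspose_mul, Matrix.conjTranspose_conjTranspose]
    calc (starRingEnd ℂ) ((C * Cᴴ).trace) = ((C * Cᴴ)ᴴ).trace := (Matrix.trace_conjTranspose _).symm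
      _ = (C * Cᴴ).trace := by rw [this]
  have hre : ((frobSq C : ℝ) : ℂ) = (C * Cᴴ).trace := by
    rw [frobSq]
    exact Complex.conj_eq_iff_re.mp hreal
  rw [hre, hCdef]
  exact trace_double_comm_eq_frobSq' φ s g hs hg
end
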